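/- For any finite collection x_1, …, x_m ∈ ℝ^n \ {0}, there exists a constant k > 0 such that for every y ∈ Cone{x_1, …, x_m}, the Euclidean norm ‖y‖ satisfies ‖y‖ ≤ k · max{ x_i · y | i = 1, …, m }. -/

import Mathlib

open RealInnerProductSpace

open Finset

lemma indepBound {n m : ℕ} (x : Fin m → EuclideanSpace ℝ (Fin n))
    (s : Finset (Fin m)) (hs : s.Nonempty)
    (hli : LinearIndependent ℝ (fun i : s => x i)) :
    ∃ k : ℝ, 0 < k ∧ ∀ t : Fin m → ℝ, (∀ i, 0 ≤ t i) → (∀ i ∉ s, t i = 0) →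
      ‖∑ i, t i • x i‖ ≤ k * s.sup' hs (fun i => ⟪x i, ∑ j, t j • x j⟫) := by
  classical
  set y : (Fin m → ℝ) → EuclideanSpace ℝ (Fin n) := fun t => ∑ j, t j • x j with hy
  have hycont : Continuous y :=
    continuous_finset_sum _ fun j _ => (continuous_apply j).smul continuous_const
  set f : (Fin m → ℝ) → ℝ := fun t => s.sup' hs (fun i => ⟪x i, y t⟫) with hf
  have hfcont : Continuous f :=
    Continuous.finset_sup'_apply hs fun i _ => continuous_const.inner hycont
  set g : (Fin m → ℝ) → ℝ := fun t => ‖y t‖ with hg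
  have hgcont : Continuous g := hycont.norm
  set Δ : Set (Fin m → ℝ) :=
    {t | (∀ i, 0 ≤ t i) ∧ (∀ i ∉ s, t i = 0) ∧ ∑ i, t i = 1} with hΔ
  -- Δ is compact
  have hclosed : IsClosed Δ := by
    have h1 : IsClosed {t : Fin m → ℝ | ∀ i, 0 ≤ t i} := by
      simpa [Set.setOf_forall] using
        isClosed_iInter fun i => isClosed_le continuous_const (continuous_apply i)
    have h2 : IsClosed {t : Fin m → ℝ | ∀ i ∉ s, t i = 0} := by
      simpa [Set.setOf_forall] using
        isClosed_iInter fun i => isClosed_iInter fun _ : i ∉ s =>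
          isClosed_eq (continuous_apply i) continuous_const
    have h3 : IsClosed {t : Fin m → ℝ | ∑ i, t i = 1} :=
      isClosed_eq (continuous_finset_sum _ fun i _ => continuous_apply i) continuous_const
    have : Δ = {t : Fin m → ℝ | ∀ i, 0 ≤ t i} ∩
        ({t | ∀ i ∉ s, t i = 0} ∩ {t | ∑ i, t i = 1}) := by
      ext t; simp [hΔ, Set.mem_setOf_eq, and_assoc]
    rw [this]; exact h1.inter (h2.inter h3)
  have hcomp : IsCompact Δ := by
    refine (isCompact_univ_pi fun _ : Fin m => isCompact_Icc (a := (0:ℝ)) (b := 1)).of_isClosed_subset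
      hclosed ?_
    intro t ht
    rcases ht with ⟨h0, _, hsum⟩
    intro i _
    refine ⟨h0 i, ?_⟩
    calc t i ≤ ∑ j, t j := Finset.single_le_sum (fun j _ => h0 j) (mem_univ i)
    _ = 1 := hsum
  -- Δ nonempty
  have hsc := hs
  obtain ⟨i₀, hi₀⟩ := hsc
  have hne : Δ.Nonempty := by
    refine ⟨fun i => if i = i₀ then 1 else 0, ?_, ?_, ?_⟩
    · intro i; by_cases h : i = i₀ <;> simp [h]
    · intro i hi
      have : i ≠ i₀ := fun h => hi (h ▸ hi₀)
      simp [this]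
    · simp
  -- f is positive on Δ
  have hfavg : ∀ t ∈ Δ, ‖y t‖ ^ 2 ≤ f t := by
    intro t ht
    rcases ht with ⟨h0, hoff, hsum⟩
    have h1 : ‖y t‖ ^ 2 = ∑ i, t i * ⟪x i, y t⟫ := by
      rw [← real_inner_self_eq_norm_sq, hy]
      rw [sum_inner]
      exact Finset.sum_congr rfl fun i _ => real_inner_smul_left _ _ _
    rw [h1]
    have h2 : ∑ i, t i * ⟪x i, y t⟫ = ∑ i ∈ s, t i * ⟪x i, y t⟫ := by
      refine (Finset.sum_subset (Finset.subset_univ s) ?_).symm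
      intro i _ hi; simp [hoff i hi]
    have h3 : ∑ i ∈ s, t i = 1 := by
      rw [← hsum]
      refine Finset.sum_subset (Finset.subset_univ s) ?_
      intro i _ hi; exact hoff i hi
    rw [h2]
    calc ∑ i ∈ s, t i * ⟪x i, y t⟫ ≤ ∑ i ∈ s, t i * f t := by
          refine Finset.sum_le_sum fun i hi => ?_
          exact mul_le_mul_of_nonneg_left
            (Finset.le_sup' (fun i => ⟪x i, y t⟫) hi) (h0 i)
    _ = f t := by rw [← Finset.sum_mul, h3, one_mul]
  have hypos : ∀ t ∈ Δ, y t ≠ 0 := by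
    intro t ht hy0
    rcases ht with ⟨h0, hoff, hsum⟩
    have h2 : ∑ i ∈ s, t i • x i = 0 := by
      rw [← hy0, hy]
      refine (Finset.sum_subset (Finset.subset_univ s) ?_)
      intro i _ hi; simp [hoff i hi]
    have h3 : ∑ i : s, t i • x (i : Fin m) = 0 := by
      rw [Finset.sum_coe_sort s (fun i => t i • x i)]; exact h2
    have h4 := Fintype.linearIndependent_iff.mp hli (fun i => t i) h3
    have h5 : ∑ i, t i = 0 := by
      have : ∀ i ∈ Finset.univ (α := Fin m), t i = 0 := by
        intro i _
        by_cases hi : i ∈ s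
        · exact h4 ⟨i, hi⟩
        · exact hoff i hi
      exact Finset.sum_eq_zero this
    rw [hsum] at h5; norm_num at h5
  have hfpos : ∀ t ∈ Δ, 0 < f t := by
    intro t ht
    have := hfavg t ht
    have h1 : 0 < ‖y t‖ ^ 2 := pow_pos (norm_pos_iff.mpr (hypos t ht)) 2
    linarith
  -- extremes on Δ
  obtain ⟨tmin, htmin, hmin⟩ := hcomp.exists_isMinOn hne hfcont.continuousOn
  obtain ⟨tmax, htmax, hmax⟩ := hcomp.exists_isMaxOn hne hgcont.continuousOn
  set eps := f tmin with heps
  have heps0 : 0 < eps := hfpos tmin htmin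
  set M := g tmax with hM
  set k := (M + 1) / eps with hk
  have hk0 : 0 < k := by
    have hM0 : 0 ≤ M := norm_nonneg _
    positivity
  have hΔbound : ∀ t ∈ Δ, g t ≤ k * f t := by
    intro t ht
    have h1 : g t ≤ M := hmax ht
    have h2 : eps ≤ f t := hmin ht
    calc g t ≤ M := h1
    _ ≤ (M + 1) := by linarith
    _ = k * eps := by rw [hk, div_mul_cancel₀ _ heps0.ne']
    _ ≤ k * f t := mul_le_mul_of_nonneg_left h2 hk0.le
  refine ⟨k, hk0, ?_⟩
  intro t h0 hoff
  set S := ∑ i, t i with hS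
  have hS0 : 0 ≤ S := Finset.sum_nonneg fun i _ => h0 i
  rcases eq_or_lt_of_le hS0 with hSz | hSpos
  · -- all coefficients vanish
    have hall : ∀ i ∈ Finset.univ (α := Fin m), t i = 0 :=
      (Finset.sum_eq_zero_iff_of_nonneg fun i _ => h0 i).mp hSz.symm
    have hy0 : (∑ i, t i • x i) = 0 :=
      Finset.sum_eq_zero fun i hi => by rw [hall i hi, zero_smul]
    rw [hy0]
    have : (s.sup' hs fun i => ⟪x i, (0 : EuclideanSpace ℝ (Fin n))⟫) = 0 := by
      rw [show (fun i => ⟪x i, (0 : EuclideanSpace ℝ (Fin n))⟫) = fun _ => (0:ℝ) by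
        ext i; exact inner_zero_right _]
      exact Finset.sup'_const hs 0
    rw [this]; simp
  · set u : Fin m → ℝ := fun i => t i / S with hu
    have huΔ : u ∈ Δ := by
      refine ⟨fun i => div_nonneg (h0 i) hS0, fun i hi => by simp [hu, hoff i hi], ?_⟩
      rw [hu, ← Finset.sum_div, ← hS, div_self hSpos.ne']
    have hyu : (∑ i, t i • x i) = S • y u := by
      rw [hy, Finset.smul_sum]
      refine Finset.sum_congr rfl fun i _ => ?_
      rw [smul_smul, hu, mul_div_cancel₀ _ hSpos.ne']
    have hnorm : ‖∑ i, t i • x i‖ = S * g u := by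
      rw [hyu, norm_smul, Real.norm_eq_abs, abs_of_pos hSpos, hg]
    have hsup : (s.sup' hs fun i => ⟪x i, ∑ j, t j • x j⟫) = S * f u := by
      have h1 : (fun i => ⟪x i, ∑ j, t j • x j⟫) = fun i => S * ⟪x i, y u⟫ := by
        ext i; rw [show (∑ j, t j • x j) = S • y u from hyu, real_inner_smul_right]
      rw [h1, hf]
      exact (Finset.comp_sup'_eq_sup'_comp hs (fun r => S * r)
        (fun a b => mul_max_of_nonneg a b hS0)).symm
    rw [hnorm, hsup]
    calc S * g u ≤ S * (k * f u) := mul_le_mul_of_nonneg_left (hΔbound u huΔ) hS0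
    _ = k * (S * f u) := by ring


lemma coneCara {n m : ℕ} (x : Fin m → EuclideanSpace ℝ (Fin n)) :
    ∀ (N : ℕ) (t : Fin m → ℝ), (univ.filter fun i => t i ≠ 0).card ≤ N →
      (∀ i, 0 ≤ t i) →
      ∃ (s : Finset (Fin m)) (t' : Fin m → ℝ),
        LinearIndependent ℝ (fun i : s => x i) ∧ (∀ i, 0 ≤ t' i) ∧
        (∀ i ∉ s, t' i = 0) ∧ ∑ i, t' i • x i = ∑ i, t i • x i := by
  intro N
  induction N with
  | zero =>
    intro t hcard ht
    have h0 : ∀ i, t i = 0 := by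
      intro i
      by_contra h
      have : i ∈ univ.filter fun i => t i ≠ 0 := by simp [h]
      have := card_pos.mpr ⟨i, this⟩
      omega
    refine ⟨∅, t, ?_, ht, fun i _ => h0 i, rfl⟩
    have : IsEmpty ((∅ : Finset (Fin m)) : Set (Fin m)) := by simp
    exact linearIndependent_empty_type
  | succ N ih =>
    intro t hcard ht
    set s₀ : Finset (Fin m) := univ.filter fun i => t i ≠ 0 with hs₀
    by_cases hli : LinearIndependent ℝ (fun i : s₀ => x i)
    · exact ⟨s₀, t, hli, ht, fun i hi => by simpa [hs₀] using hi, rfl⟩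
    · -- get a vanishing combination
      obtain ⟨g, hgsum, j₀, hj₀⟩ := Fintype.not_linearIndependent_iff.mp hli
      set c : Fin m → ℝ := fun i => if h : i ∈ s₀ then g ⟨i, h⟩ else 0 with hc
      have hcsupp : ∀ i, c i ≠ 0 → t i ≠ 0 := by
        intro i hci
        by_contra h
        have : i ∉ s₀ := by simp [hs₀, h]
        simp [hc, this] at hci
      have hcsum : ∑ i, c i • x i = 0 := by
        rw [← Finset.sum_filter_of_ne (p := fun i => t i ≠ 0)]
        · rw [← hs₀, ← Finset.sum_coe_sort s₀ (fun i => c i • x i)]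
          rw [← hgsum]
          refine Finset.sum_congr rfl fun i _ => ?_
          simp [hc, i.2]
        · intro i _ hne
          have hci : c i ≠ 0 := fun h => hne (by simp [h])
          exact hcsupp i hci
      have key : ∀ c : Fin m → ℝ, (∀ i, c i ≠ 0 → t i ≠ 0) → (∑ i, c i • x i = 0) →
          (∃ i, 0 < c i) →
          ∃ t' : Fin m → ℝ, (∀ i, 0 ≤ t' i) ∧
            (univ.filter fun i => t' i ≠ 0).card ≤ N ∧
            ∑ i, t' i • x i = ∑ i, t i • x i := by
        intro c hcs hcz ⟨i₁, hi₁⟩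
        set P : Finset (Fin m) := univ.filter fun i => 0 < c i with hP
        have hPne : P.Nonempty := ⟨i₁, by simp [hP, hi₁]⟩
        obtain ⟨j, hjP, hjmin⟩ := P.exists_min_image (fun i => t i / c i) hPne
        have hcj : 0 < c j := by simpa [hP] using hjP
        set lam := t j / c j with hlam
        have hlam0 : 0 ≤ lam := div_nonneg (ht j) hcj.le
        set t' : Fin m → ℝ := fun i => t i - lam * c i with ht'
        have ht'0 : ∀ i, 0 ≤ t' i := by
          intro i
          rcases le_or_gt (c i) 0 with h | h
          · have : lam * c i ≤ 0 := mul_nonpos_of_nonneg_of_nonpos hlam0 h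
            simp only [ht']; linarith [ht i]
          · have hiP : i ∈ P := by simp [hP, h]
            have := hjmin i hiP
            have : lam * c i ≤ t i := by
              rw [hlam]; exact (le_div_iff₀ h).mp this
            simp only [ht']; linarith
        have ht'j : t' j = 0 := by
          simp only [ht', hlam]
          field_simp
          simp
        have htj : t j ≠ 0 := hcs j hcj.ne'
        have hsub : (univ.filter fun i => t' i ≠ 0) ⊆ s₀.erase j := by
          intro i hi
          simp only [mem_filter, mem_univ, true_and] at hi
          refine Finset.mem_erase.mpr ⟨?_, ?_⟩
          · rintro rfl; exact hi ht'j
          · simp only [hs₀, mem_filter, mem_univ, true_and]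
            intro h
            rcases eq_or_ne (c i) 0 with h' | h'
            · exact hi (by simp [ht', h, h'])
            · exact hcs i h' h
        have hcard' : (univ.filter fun i => t' i ≠ 0).card ≤ N := by
          have h1 := Finset.card_le_card hsub
          have h2 : j ∈ s₀ := by simp [hs₀, htj]
          have h3 := Finset.card_erase_of_mem h2
          omega
        refine ⟨t', ht'0, hcard', ?_⟩
        simp only [ht', sub_smul, Finset.sum_sub_distrib]
        have : ∑ i, (lam * c i) • x i = lam • ∑ i, c i • x i := by
          rw [Finset.smul_sum]
          exact Finset.sum_congr rfl fun i _ => by rw [smul_smul]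
        rw [this, hcz, smul_zero, sub_zero]
      have hex : c j₀ ≠ 0 := by simpa [hc, j₀.2] using hj₀
      by_cases hpos : ∃ i, 0 < c i
      · obtain ⟨t', h1, h2, h3⟩ := key c hcsupp hcsum hpos
        obtain ⟨s, t'', hli', h4, h5, h6⟩ := ih t' h2 h1
        exact ⟨s, t'', hli', h4, h5, h6.trans h3⟩
      · push_neg at hpos
        have hpos' : ∃ i, 0 < -c i := by
          refine ⟨j₀, ?_⟩
          have : c (j₀ : Fin m) < 0 := lt_of_le_of_ne (hpos j₀) hex
          linarith
        have hsum' : ∑ i, (-c) i • x i = 0 := by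
          simp only [Pi.neg_apply, neg_smul, Finset.sum_neg_distrib, hcsum, neg_zero]
        have hsupp' : ∀ i, (-c) i ≠ 0 → t i ≠ 0 := fun i hi =>
          hcsupp i (by simpa using hi)
        obtain ⟨t', h1, h2, h3⟩ := key (-c) hsupp' hsum' hpos'
        obtain ⟨s, t'', hli', h4, h5, h6⟩ := ih t' h2 h1
        exact ⟨s, t'', hli', h4, h5, h6.trans h3⟩

/-- For nonzero vectors `x 1, …, x m` of `ℝ^n` (with `m ≥ 1`), there is a
constant `k > 0` such that every `y` in the cone hull of the `x i` satisfies
`‖y‖ ≤ k * max_i ⟪x i, y⟫`. -/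
theorem stmt4 (n m : ℕ) (hm : 0 < m) (x : Fin m → EuclideanSpace ℝ (Fin n))
    (hx : ∀ i, x i ≠ 0) :
    ∃ k : ℝ, 0 < k ∧
      ∀ y ∈ {y : EuclideanSpace ℝ (Fin n) |
          ∃ t : Fin m → ℝ, (∀ i, 0 ≤ t i) ∧ y = ∑ i, t i • x i},
        ‖y‖ ≤ k * (Finset.univ.sup' (Finset.univ_nonempty_iff.mpr ⟨⟨0, hm⟩⟩)
          fun i => ⟪x i, y⟫) := by
  classical
  have hK : ∀ s : Finset (Fin m), ∃ k : ℝ, 0 < k ∧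
      ∀ (h1 : s.Nonempty), LinearIndependent ℝ (fun i : s => x i) →
        ∀ t : Fin m → ℝ, (∀ i, 0 ≤ t i) → (∀ i ∉ s, t i = 0) →
          ‖∑ i, t i • x i‖ ≤ k * s.sup' h1 (fun i => ⟪x i, ∑ j, t j • x j⟫) := by
    intro s
    by_cases h1 : s.Nonempty
    · by_cases h2 : LinearIndependent ℝ (fun i : s => x i)
      · obtain ⟨k, hk, hb⟩ := indepBound x s h1 h2
        exact ⟨k, hk, fun _ _ => hb⟩
      · exact ⟨1, one_pos, fun _ h => absurd h h2⟩
    · exact ⟨1, one_pos, fun h => absurd h h1⟩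
  choose K hKpos hKb using hK
  have hne : (Finset.univ : Finset (Finset (Fin m))).Nonempty := ⟨∅, mem_univ _⟩
  set k := (Finset.univ : Finset (Finset (Fin m))).sup' hne K with hk
  have hk0 : 0 < k := lt_of_lt_of_le (hKpos ∅) (Finset.le_sup' K (mem_univ ∅))
  refine ⟨k, hk0, ?_⟩
  rintro y ⟨t, ht0, rfl⟩
  obtain ⟨s, t', hli, ht'0, ht's, hsum⟩ :=
    coneCara x (univ.filter fun i => t i ≠ 0).card t le_rfl ht0
  by_cases hsne : s.Nonempty
  · have hb := hKb s hsne hli t' ht'0 ht's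
    rw [hsum] at hb
    set F := s.sup' hsne (fun i => ⟪x i, ∑ j, t j • x j⟫) with hF
    have hF0 : 0 ≤ F := by
      by_contra h
      push_neg at h
      have : K s * F < 0 := mul_neg_of_pos_of_neg (hKpos s) h
      have := norm_nonneg (∑ i, t i • x i)
      linarith
    have hFle : F ≤ (Finset.univ.sup' (Finset.univ_nonempty_iff.mpr ⟨⟨0, hm⟩⟩)
        fun i => ⟪x i, ∑ j, t j • x j⟫) :=
      Finset.sup'_mono _ (Finset.subset_univ s) hsne
    have hKle : K s ≤ k := Finset.le_sup' K (mem_univ s)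
    calc ‖∑ i, t i • x i‖ ≤ K s * F := hb
    _ ≤ k * (Finset.univ.sup' (Finset.univ_nonempty_iff.mpr ⟨⟨0, hm⟩⟩)
        fun i => ⟪x i, ∑ j, t j • x j⟫) :=
      mul_le_mul hKle hFle hF0 hk0.le
  · rw [Finset.not_nonempty_iff_eq_empty] at hsne
    have ht'z : ∀ i, t' i = 0 := fun i => ht's i (by simp [hsne])
    have hy0 : (∑ i, t i • x i) = 0 := by
      rw [← hsum]
      exact Finset.sum_eq_zero fun i _ => by rw [ht'z i, zero_smul]
    rw [hy0]
    have : (Finset.univ.sup' (Finset.univ_nonempty_iff.mpr ⟨⟨0, hm⟩⟩)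
        fun i => ⟪x i, (0 : EuclideanSpace ℝ (Fin n))⟫) = 0 := by
      rw [show (fun i => ⟪x i, (0 : EuclideanSpace ℝ (Fin n))⟫) = fun _ : Fin m => (0:ℝ) by
        ext i; exact inner_zero_right _]
      exact Finset.sup'_const _ 0
    rw [this]; simp
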